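/- For any sequential decision-making mechanism M, any k with 0 ≤ k ≤ n, and any s_1 ∈ A_1, …, s_k ∈ A_k, the partial mechanism M_k(s_1, …, s_k) is responsibility-free if and only if γ(s_1, …, s_k, u_{k+1}, …, u_n) = γ(s_1, …, s_k, u'_{k+1}, …, u'_n) for all tuples (u_{k+1}, …, u_n) and (u'_{k+1}, …, u'_n) of actions of the remaining agents (i.e., with the prefix s_1, …, s_k fixed, the value of γ does not depend on the actions of agents k+1 through n). -/
import Mathlib


/-- A sequential decision-making mechanism: `n` agents, finite nonempty
action sets `A 0, …, A (n-1)` (agents act in the order of their indices),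
and a deontic constraint `γ` on action profiles. -/
structure Mech where
  n : ℕ
  A : Fin n → Type
  fin : ∀ i, Finite (A i)
  ne : ∀ i, Nonempty (A i)
  γ : (∀ i, A i) → Bool

namespace Mech

/-- An action profile. -/
abbrev Profile (M : Mech) : Type := ∀ i, M.A i

/-- Agent `i` is responsible under profile `s`: the deontic constraint is
violated, and agent `i` had an action `t` that, given the actions of the
agents before it, would have guaranteed the constraint no matter what the
later agents do. -/
def Responsible (M : Mech) (s : M.Profile) (i : Fin M.n) : Prop :=
  M.γ s = false ∧ ∃ t : M.A i, ∀ s' : M.Profile,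
    (∀ j, j < i → s' j = s j) → s' i = t → M.γ s' = true

/-- `cf_i(s_1, …, s_{i-1})`: agent `i` has an action guaranteeing the
constraint, given the prefix of `s` before `i`. -/
def Cf (M : Mech) (s : M.Profile) (i : Fin M.n) : Prop :=
  ∃ t : M.A i, ∀ s' : M.Profile,
    (∀ j, j < i → s' j = s j) → s' i = t → M.γ s' = true

/-- Diffusion-free: at most one responsible agent whenever `γ` is violated. -/
def DF (M : Mech) : Prop :=
  ∀ s : M.Profile, M.γ s = false →
    ∀ i j, M.Responsible s i → M.Responsible s j → i = j

/-- Gap-free: at least one responsible agent whenever `γ` is violated. -/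
def GF (M : Mech) : Prop :=
  ∀ s : M.Profile, M.γ s = false → ∃ i, M.Responsible s i

/-- Gap-and-diffusion-free: exactly one responsible agent whenever `γ` is violated. -/
def GDF (M : Mech) : Prop :=
  ∀ s : M.Profile, M.γ s = false → ∃! i, M.Responsible s i

/-- Responsibility-free: no agent is responsible under any profile. -/
def RF (M : Mech) : Prop :=
  ∀ (s : M.Profile) (i : Fin M.n), ¬ M.Responsible s i

/-- Agent `j` of the partial mechanism `M_k` as an agent of `M`. -/
def shift (M : Mech) (k : ℕ) (h : k ≤ M.n) (j : Fin (M.n - k)) : Fin M.n :=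
  ⟨k + j.val, by omega⟩

/-- Combine a prefix of `s` (first `k` actions) with actions `u` of
agents `k+1, …, n` into a full profile. -/
def glue (M : Mech) (k : ℕ) (h : k ≤ M.n) (s : M.Profile)
    (u : ∀ j : Fin (M.n - k), M.A (M.shift k h j)) : M.Profile := fun i =>
  if hi : i.val < k then s i
  else
    have hj : i.val - k < M.n - k := by omega
    have he : M.shift k h ⟨i.val - k, hj⟩ = i := Fin.ext (by
      show k + (i.val - k) = i.val
      omega)
    he ▸ u ⟨i.val - k, hj⟩

/-- The partial mechanism `M_k(s_1, …, s_k)`: the first `k` agents have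
already acted according to `s`. -/
def part (M : Mech) (k : ℕ) (h : k ≤ M.n) (s : M.Profile) : Mech where
  n := M.n - k
  A := fun j => M.A (M.shift k h j)
  fin := fun _ => M.fin _
  ne := fun _ => M.ne _
  γ := fun u => M.γ (M.glue k h s u)

/-- The restriction of a profile of `M` to a profile of `M_k(s_1, …, s_k)`. -/
def restrict (M : Mech) (k : ℕ) (h : k ≤ M.n) (s : M.Profile) :
    (M.part k h s).Profile :=
  fun j => s (M.shift k h j)

lemma aux_const (N : Mech) (hrf : N.RF) :
    ∀ d i : ℕ, i + d = N.n → ∀ s t : N.Profile, N.γ s = false →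
      (∀ j : Fin N.n, (j : ℕ) < i → t j = s j) → N.γ t = false := by
  intro d
  induction d with
  | zero =>
    intro i hi s t hs hag
    have : t = s := funext fun j => hag j (by omega)
    rw [this]; exact hs
  | succ d ih =>
    intro i hi s t hs hag
    have hi' : i < N.n := by omega
    have hnr := hrf s ⟨i, hi'⟩
    rw [Responsible] at hnr
    push_neg at hnr
    obtain ⟨s', hlt, hsi, hγ⟩ := hnr hs (t ⟨i, hi'⟩)
    have hγ' : N.γ s' = false := by
      simpa using hγ
    refine ih (i + 1) (by omega) s' t hγ' ?_
    intro j hj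
    rcases Nat.lt_or_ge (j : ℕ) i with hcase | hcase
    · rw [hag j hcase, ← hlt j (Fin.lt_def.mpr hcase)]
    · have hji : j = ⟨i, hi'⟩ := Fin.ext (by simp only [Fin.val_mk]; omega)
      rw [hji, hsi]

lemma RF_iff_const (N : Mech) :
    N.RF ↔ ∀ u u' : N.Profile, N.γ u = N.γ u' := by
  constructor
  · intro hrf u u'
    have key : ∀ a b : N.Profile, N.γ a = false → N.γ b = false :=
      fun a b ha => aux_const N hrf N.n 0 (by omega) a b ha (fun j hj => by omega)
    cases hu : N.γ u <;> cases hu' : N.γ u'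
    · rfl
    · exact absurd (key u u' hu) (by simp [hu'])
    · exact absurd (key u' u hu') (by simp [hu])
    · rfl
  · rintro hconst s i ⟨hfalse, t, ht⟩
    have h1 : N.γ (Function.update s i t) = true := by
      refine ht _ (fun j hj => Function.update_of_ne (Fin.ne_of_lt hj) _ _)
        (Function.update_self _ _ _)
    have h2 : N.γ (Function.update s i t) = N.γ s := hconst _ _
    rw [h1, hfalse] at h2
    exact absurd h2 (by simp)

end Mech

/-- the partial mechanism `M_k(s_1, …, s_k)` is
responsibility-free iff, with the prefix `s_1, …, s_k` fixed, the value of the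
deontic constraint does not depend on the actions of agents `k+1` through `n`. -/
theorem part_RF_iff_const (M : Mech) (k : ℕ) (h : k ≤ M.n) (s : M.Profile) :
    (M.part k h s).RF ↔
      ∀ u u' : (M.part k h s).Profile,
        (M.part k h s).γ u = (M.part k h s).γ u' := by
  exact Mech.RF_iff_const (M.part k h s)
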